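/- arXiv:1409.8003 — 2 statements merged into one kernel-verified Lean document; each statement's English description precedes it below -/
import Mathlib

section
/- In the Iwahori–Hecke algebra of a Coxeter group, the map sending vⁿT_w to v⁻ⁿ(T_{w⁻¹})⁻¹ extends to a well-defined ring involution of the Hecke algebra (an additive involutive ring homomorphism that is semilinear over the ring involution v ↦ v⁻¹ of ℤ[v,v⁻¹]). -/
open LaurentPolynomial

namespace HeckeBarAux

theorem ring_inverse_eq {H : Type} [Ring H] {x y : H} (hx : IsUnit x) (hxy : x * y = 1) :
    Ring.inverse x = y := by
  calc Ring.inverse x = Ring.inverse x * (x * y) := by rw [hxy, mul_one]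
  _ = y := by rw [← mul_assoc, Ring.inverse_mul_cancel x hx, one_mul]

theorem span_induction {W H : Type} [Ring H] [Algebra (LaurentPolynomial ℤ) H]
    (Tb : W → H) (bT : Module.Basis W (LaurentPolynomial ℤ) H)
    (hbT : ∀ w, bT w = Tb w) (p : Submodule (LaurentPolynomial ℤ) H)
    (hp : ∀ w, Tb w ∈ p) (x : H) : x ∈ p := by
  have h : ⊤ ≤ p := by
    rw [← bT.span_eq]
    refine Submodule.span_le.mpr ?_
    rintro _ ⟨w, rfl⟩
    rw [hbT]; exact hp w
  exact h trivial

end HeckeBarAux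

/-- In the Iwahori–Hecke algebra of a Coxeter group, the map sending `vⁿT_w` to
`v⁻ⁿ(T_{w⁻¹})⁻¹` extends to a well-defined ring involution of the Hecke algebra:
an additive, multiplicative, involutive map which is semilinear over the ring involution
`v ↦ v⁻¹` of `ℤ[v,v⁻¹]`. -/
theorem hecke_bar_involution_exists
    (B W : Type) [Group W] (M : CoxeterMatrix B) (cs : CoxeterSystem M W)
    (H : Type) [Ring H] [Algebra (LaurentPolynomial ℤ) H]
    (Tb : W → H) (bT : Module.Basis W (LaurentPolynomial ℤ) H) (hbT : ∀ w, bT w = Tb w)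
    (hmul : ∀ w w' : W, cs.length (w * w') = cs.length w + cs.length w' →
      Tb w * Tb w' = Tb (w * w'))
    (hquad : ∀ i : B,
      (Tb (cs.simple i) + 1) * (Tb (cs.simple i) - algebraMap (LaurentPolynomial ℤ) H (T 2)) = 0)
    (hunit : ∀ w : W, IsUnit (Tb w)) :
    ∃ bar : H → H,
      (∀ x y : H, bar (x + y) = bar x + bar y) ∧
      (∀ x y : H, bar (x * y) = bar x * bar y) ∧
      bar 1 = 1 ∧
      (∀ x : H, bar (bar x) = x) ∧
      (∀ (n : ℤ) (w : W),
        bar (algebraMap (LaurentPolynomial ℤ) H (T n) * Tb w) =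
          algebraMap (LaurentPolynomial ℤ) H (T (-n)) * Ring.inverse (Tb w⁻¹)) := by
  classical
  set q : H := algebraMap (LaurentPolynomial ℤ) H (T 2) with hq
  set q' : H := algebraMap (LaurentPolynomial ℤ) H (T (-2)) with hq'
  have hqq' : q' * q = 1 := by
    rw [hq, hq', ← map_mul, ← T_add]
    norm_num
  have hcq : ∀ x : H, x * q = q * x := fun x => by rw [hq]; exact (Algebra.commutes _ _).symm
  have hcq' : ∀ x : H, x * q' = q' * x := fun x => by rw [hq']; exact (Algebra.commutes _ _).symm
  set D : W → H := fun w => Ring.inverse (Tb w⁻¹) with hDdef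
  have hTe : Tb 1 = 1 := by
    have h1 : Tb 1 * Tb 1 = Tb 1 := by
      have := hmul 1 1 (by simp)
      simpa using this
    have h2 := congrArg (· * Ring.inverse (Tb 1)) h1
    simpa [mul_assoc, Ring.mul_inverse_cancel _ (hunit 1)] using h2
  have hD1 : D 1 = 1 := by simp [hDdef, hTe]
  have hD_mul : ∀ u w : W, cs.length (u * w) = cs.length u + cs.length w →
      D u * D w = D (u * w) := by
    intro u w h
    have hlen : cs.length (w⁻¹ * u⁻¹) = cs.length w⁻¹ + cs.length u⁻¹ := by
      rw [← mul_inv_rev, cs.length_inv, cs.length_inv, cs.length_inv, h, add_comm]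
    have hT : Tb w⁻¹ * Tb u⁻¹ = Tb ((u * w)⁻¹) := by
      rw [hmul _ _ hlen, mul_inv_rev]
    obtain ⟨a, ha⟩ := hunit w⁻¹
    obtain ⟨b, hb⟩ := hunit u⁻¹
    show Ring.inverse (Tb u⁻¹) * Ring.inverse (Tb w⁻¹) = Ring.inverse (Tb (u * w)⁻¹)
    rw [← hT, ← ha, ← hb, ← Units.val_mul, Ring.inverse_unit, Ring.inverse_unit,
      Ring.inverse_unit, mul_inv_rev, Units.val_mul]
  set bar : H → H := fun x => (bT.repr x).sum fun w a => invert a • D w with hbar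
  have bar_add : ∀ x y : H, bar (x + y) = bar x + bar y := by
    intro x y
    simp only [hbar, map_add]
    exact Finsupp.sum_add_index' (fun w => by simp) (fun w a b => by simp [map_add, add_smul])
  have bar_smul : ∀ (a : LaurentPolynomial ℤ) (x : H), bar (a • x) = invert a • bar x := by
    intro a x
    simp only [hbar, map_smul]
    rw [Finsupp.sum_smul_index (fun w => by simp), Finsupp.smul_sum]
    simp [map_mul, mul_smul]
  have bar_zero : bar 0 = 0 := by simp [hbar]
  have bar_basis : ∀ w, bar (Tb w) = D w := by
    intro w
    simp only [hbar, ← hbT w, Module.Basis.repr_self]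
    rw [Finsupp.sum_single_index (by simp)]
    simp
  have bar_neg : ∀ x : H, bar (-x) = - bar x := by
    intro x
    have h := bar_add x (-x)
    rw [add_neg_cancel, bar_zero] at h
    exact eq_neg_of_add_eq_zero_left ((add_comm _ _).trans h.symm)
  have bar_sub : ∀ x y : H, bar (x - y) = bar x - bar y := by
    intro x y
    rw [sub_eq_add_neg, bar_add, bar_neg, sub_eq_add_neg]
  have bar_q : ∀ x : H, bar (q * x) = q' * bar x := by
    intro x
    rw [hq, ← Algebra.smul_def, bar_smul, invert_T, Algebra.smul_def, ← hq']
  have bar_simple : ∀ (i : B) (y : H),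
      bar (Tb (cs.simple i) * y) = D (cs.simple i) * bar y := by
    intro i
    have hc : Tb (cs.simple i) * q = q * Tb (cs.simple i) := hcq _
    have hsq : Tb (cs.simple i) * Tb (cs.simple i)
        = q * Tb (cs.simple i) - Tb (cs.simple i) + q := by
      have h := hquad i
      rw [add_mul, one_mul, mul_sub] at h
      rw [hc] at h
      apply eq_of_sub_eq_zero
      rw [← h]; abel
    have hkey : Tb (cs.simple i) * (Tb (cs.simple i) - q + 1) = q := by
      calc Tb (cs.simple i) * (Tb (cs.simple i) - q + 1)
          = Tb (cs.simple i) * Tb (cs.simple i) - Tb (cs.simple i) * q + Tb (cs.simple i) := by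
            rw [mul_add, mul_sub, mul_one]
        _ = q := by rw [hsq, hc]; abel
    have hDs : D (cs.simple i) = q' * (Tb (cs.simple i) - q + 1) := by
      have hi : (cs.simple i)⁻¹ = cs.simple i := cs.inv_simple i
      simp only [hDdef, hi]
      refine HeckeBarAux.ring_inverse_eq (hunit _) ?_
      calc Tb (cs.simple i) * (q' * (Tb (cs.simple i) - q + 1))
          = q' * (Tb (cs.simple i) * (Tb (cs.simple i) - q + 1)) := by
            rw [← mul_assoc, hcq' (Tb (cs.simple i)), mul_assoc]
        _ = 1 := by rw [hkey, hqq']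
    have h1 : Tb (cs.simple i) * D (cs.simple i) = 1 := by
      simp only [hDdef, cs.inv_simple]
      exact Ring.mul_inverse_cancel _ (hunit _)
    have hDsq : D (cs.simple i) * D (cs.simple i)
        = q' + q' * D (cs.simple i) - D (cs.simple i) := by
      calc D (cs.simple i) * D (cs.simple i)
          = q' * ((Tb (cs.simple i) - q + 1) * D (cs.simple i)) := by rw [hDs, mul_assoc]
        _ = q' * (1 - q * D (cs.simple i) + D (cs.simple i)) := by
            rw [add_mul, sub_mul, one_mul, h1]
        _ = q' + q' * D (cs.simple i) - D (cs.simple i) := by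
            rw [mul_add, mul_sub, mul_one, ← mul_assoc, hqq', one_mul]; abel
    have hbasis : ∀ w, bar (Tb (cs.simple i) * Tb w) = D (cs.simple i) * D w := by
      intro w
      rcases cs.length_simple_mul w i with hlen | hlen
      · have h : cs.length (cs.simple i * w) = cs.length (cs.simple i) + cs.length w := by
          rw [cs.length_simple, hlen, add_comm]
        rw [hmul _ _ h, bar_basis, hD_mul _ _ h]
      · set w' := cs.simple i * w with hw'
        have hsw' : cs.simple i * w' = w := by
          rw [hw', ← mul_assoc, cs.simple_mul_simple_self, one_mul]
        have h2 : cs.length (cs.simple i * w') = cs.length (cs.simple i) + cs.length w' := by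
          rw [hsw', cs.length_simple, ← hlen]; omega
        have hTw : Tb (cs.simple i) * Tb w' = Tb w := by rw [hmul _ _ h2, hsw']
        have hDw : D (cs.simple i) * D w' = D w := by rw [hD_mul _ _ h2, hsw']
        have hexp : Tb (cs.simple i) * Tb w = q * Tb w - Tb w + q * Tb w' := by
          calc Tb (cs.simple i) * Tb w = (Tb (cs.simple i) * Tb (cs.simple i)) * Tb w' := by
                rw [mul_assoc, hTw]
            _ = (q * Tb (cs.simple i) - Tb (cs.simple i) + q) * Tb w' := by rw [hsq]
            _ = q * (Tb (cs.simple i) * Tb w') - Tb (cs.simple i) * Tb w' + q * Tb w' := by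
                rw [add_mul, sub_mul, mul_assoc]
            _ = q * Tb w - Tb w + q * Tb w' := by rw [hTw]
        have hr : D (cs.simple i) * D w = q' * D w - D w + q' * D w' := by
          calc D (cs.simple i) * D w = (D (cs.simple i) * D (cs.simple i)) * D w' := by
                rw [mul_assoc, hDw]
            _ = (q' + q' * D (cs.simple i) - D (cs.simple i)) * D w' := by rw [hDsq]
            _ = (q' * D w' + q' * (D (cs.simple i) * D w')) - D (cs.simple i) * D w' := by
                rw [sub_mul, add_mul, mul_assoc]
            _ = q' * D w - D w + q' * D w' := by rw [hDw]; abel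
        rw [hexp, bar_add, bar_sub, bar_q, bar_q, bar_basis, bar_basis, hr]
    intro y
    let p : Submodule (LaurentPolynomial ℤ) H :=
      { carrier := {y | bar (Tb (cs.simple i) * y) = D (cs.simple i) * bar y}
        zero_mem' := by
          show bar (Tb (cs.simple i) * 0) = D (cs.simple i) * bar 0
          rw [mul_zero, bar_zero, mul_zero]
        add_mem' := by
          intro u v hu hv
          show bar (Tb (cs.simple i) * (u + v)) = D (cs.simple i) * bar (u + v)
          rw [mul_add, bar_add, hu, hv, bar_add, mul_add]
        smul_mem' := by
          intro c x hx
          show bar (Tb (cs.simple i) * (c • x)) = D (cs.simple i) * bar (c • x)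
          rw [mul_smul_comm, bar_smul, hx, bar_smul, mul_smul_comm] }
    exact HeckeBarAux.span_induction Tb bT hbT p
      (fun w => by
        show bar (Tb (cs.simple i) * Tb w) = D (cs.simple i) * bar (Tb w)
        rw [bar_basis]; exact hbasis w) y
  have bar_mulT : ∀ (w : W) (y : H), bar (Tb w * y) = D w * bar y := by
    have key : ∀ (ω : List B), cs.IsReduced ω → ∀ y,
        bar (Tb (cs.wordProd ω) * y) = D (cs.wordProd ω) * bar y := by
      intro ω
      induction ω with
      | nil => intro _ y; rw [cs.wordProd_nil, hTe, hD1, one_mul, one_mul]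
      | cons i ω' ih =>
        intro hred y
        have hred' : cs.IsReduced ω' := by
          have := CoxeterSystem.IsReduced.drop hred 1
          simpa using this
        have h1 : cs.length (cs.wordProd (i :: ω')) = ω'.length + 1 := by
          have : cs.length (cs.wordProd (i :: ω')) = (i :: ω').length := hred
          simpa using this
        have h1' : cs.length (cs.wordProd ω') = ω'.length := hred'
        have hlen : cs.length (cs.simple i * cs.wordProd ω')
            = cs.length (cs.simple i) + cs.length (cs.wordProd ω') := by
          rw [← cs.wordProd_cons, h1, cs.length_simple, h1']
          omega
        rw [cs.wordProd_cons, ← hmul _ _ hlen, mul_assoc, bar_simple, ih hred',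
          ← mul_assoc, hD_mul _ _ hlen]
    intro w y
    obtain ⟨ω, hred, rfl⟩ := cs.exists_reduced_word' w
    exact key ω hred y
  have bar_mul : ∀ x y : H, bar (x * y) = bar x * bar y := by
    intro x y
    let p : Submodule (LaurentPolynomial ℤ) H :=
      { carrier := {x | ∀ y, bar (x * y) = bar x * bar y}
        zero_mem' := by
          intro y
          rw [zero_mul, bar_zero, zero_mul]
        add_mem' := by
          intro u v hu hv y
          rw [add_mul, bar_add, bar_add, hu, hv, add_mul]
        smul_mem' := by
          intro c x hx y
          rw [smul_mul_assoc, bar_smul, bar_smul, smul_mul_assoc, hx] }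
    exact HeckeBarAux.span_induction Tb bT hbT p
      (fun w y => by rw [bar_mulT, bar_basis]) x y
  have bar_one : bar 1 = 1 := by
    have h := bar_basis 1
    rw [hTe, hD1] at h
    exact h
  have bar_D : ∀ w, bar (D w) = Tb w := by
    intro w
    have h1 : D w * Tb w⁻¹ = 1 := by
      simp only [hDdef]
      exact Ring.inverse_mul_cancel _ (hunit _)
    have h2 : bar (D w) * D w⁻¹ = 1 := by
      have hm := bar_mul (D w) (Tb w⁻¹)
      rw [h1, bar_one, bar_basis] at hm
      exact hm.symm
    have h3 : D w⁻¹ * Tb w = 1 := by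
      have hDi : D w⁻¹ = Ring.inverse (Tb w) := by simp only [hDdef, inv_inv]
      rw [hDi]
      exact Ring.inverse_mul_cancel _ (hunit _)
    calc bar (D w) = bar (D w) * (D w⁻¹ * Tb w) := by rw [h3, mul_one]
      _ = Tb w := by rw [← mul_assoc, h2, one_mul]
  have bar_invol : ∀ x : H, bar (bar x) = x := by
    intro x
    let p : Submodule (LaurentPolynomial ℤ) H :=
      { carrier := {x | bar (bar x) = x}
        zero_mem' := by
          show bar (bar 0) = 0
          rw [bar_zero, bar_zero]
        add_mem' := by
          intro u v hu hv
          show bar (bar (u + v)) = u + v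
          rw [bar_add, bar_add, hu, hv]
        smul_mem' := by
          intro c x hx
          show bar (bar (c • x)) = c • x
          rw [bar_smul, bar_smul, involutive_invert c, hx] }
    exact HeckeBarAux.span_induction Tb bT hbT p
      (fun w => by
        show bar (bar (Tb w)) = Tb w
        rw [bar_basis, bar_D]) x
  refine ⟨bar, bar_add, bar_mul, bar_one, bar_invol, ?_⟩
  intro n w
  have hsm : algebraMap (LaurentPolynomial ℤ) H (T n) * Tb w
      = (T n : LaurentPolynomial ℤ) • Tb w := (Algebra.smul_def _ _).symm
  rw [hsm, bar_smul, bar_basis, invert_T, Algebra.smul_def]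
end

section
/- For G = GL_n over an algebraically closed field K, given two complete flags V₀ ⊂ V₁ ⊂ … ⊂ V_n and V'₀ ⊂ V'₁ ⊂ … ⊂ V'_n in K^n, there exists a unique permutation w of {1,…,n} such that there is a basis {v₁,…,v_n} of K^n with {v₁,…,v_i} a basis of V_i and {v_{w(1)},…,v_{w(i)}} a basis of V'_i for all i. -/
open Submodule

section Aux

variable {K : Type} [Field K] {n : ℕ}

lemma range_sub {α β : Type*} (p : α → Prop) (f : α → β) :
    (Set.range fun j : {j : α // p j} => f j) = f '' {j | p j} := by
  ext y
  constructor
  · rintro ⟨⟨j, hj⟩, rfl⟩; exact ⟨j, hj, rfl⟩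
  · rintro ⟨j, hj, rfl⟩; exact ⟨⟨j, hj⟩, rfl⟩

lemma range_sub2 {α β γ : Type*} (p : α → Prop) (g : α → β) (f : β → γ) :
    (Set.range fun j : {j : α // p j} => f (g j)) = f '' (g '' {j | p j}) := by
  ext y
  constructor
  · rintro ⟨⟨j, hj⟩, rfl⟩; exact ⟨g j, ⟨j, hj, rfl⟩, rfl⟩
  · rintro ⟨b, ⟨j, hj, rfl⟩, rfl⟩; exact ⟨⟨j, hj⟩, rfl⟩

lemma set_insert (j : Fin n) :
    {s : Fin n | (s : ℕ) < ((j.succ : Fin (n+1)) : ℕ)}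
      = insert j {s : Fin n | (s : ℕ) < ((j.castSucc : Fin (n+1)) : ℕ)} := by
  ext s
  simp only [Set.mem_setOf_eq, Set.mem_insert_iff, Fin.val_succ, Fin.coe_castSucc, Fin.ext_iff]
  omega

/-- Characterization of the permutation in terms of the flags only. -/
lemma char_lemma
    (V V' : Fin (n + 1) → Submodule K (Fin n → K))
    (w : Equiv.Perm (Fin n)) (v : Fin n → (Fin n → K))
    (li : LinearIndependent K v)
    (hV : ∀ i : Fin (n + 1),
      V i = span K (Set.range fun j : {j : Fin n // (j : ℕ) < (i : ℕ)} => v j))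
    (hV' : ∀ i : Fin (n + 1),
      V' i = span K (Set.range fun j : {j : Fin n // (j : ℕ) < (i : ℕ)} => v (w j)))
    (j : Fin n) (k : Fin (n + 1)) :
    ((w j : ℕ) < (k : ℕ)) ↔ ¬ (V k ⊓ V' j.succ ≤ V' j.castSucc) := by
  have hVi : ∀ i : Fin (n+1), V i = span K (v '' {t : Fin n | (t : ℕ) < (i : ℕ)}) := by
    intro i; rw [hV i, range_sub]
  have hV'i : ∀ i : Fin (n+1),
      V' i = span K (v '' (w '' {s : Fin n | (s : ℕ) < (i : ℕ)})) := by
    intro i; rw [hV' i, range_sub2]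
  constructor
  · intro hlt hle
    have mem1 : v (w j) ∈ V k := by
      rw [hVi]; exact subset_span ⟨w j, hlt, rfl⟩
    have mem2 : v (w j) ∈ V' j.succ := by
      rw [hV'i]
      exact subset_span ⟨w j, ⟨j, by simp [Fin.val_succ], rfl⟩, rfl⟩
    have nmem : v (w j) ∉ V' j.castSucc := by
      rw [hV'i]
      apply li.notMem_span_image
      rintro ⟨s, hs, hws⟩
      have : s = j := w.injective hws
      subst this
      simp at hs
    exact nmem (hle ⟨mem1, mem2⟩)
  · intro hnle
    by_contra hnlt
    apply hnle
    rintro z ⟨hz1, hz2⟩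
    rw [hV'i] at hz2
    rw [set_insert, Set.image_insert_eq, Set.image_insert_eq, span_insert] at hz2
    obtain ⟨p, hp, q, hq, hpq⟩ := Submodule.mem_sup.mp hz2
    obtain ⟨c, rfl⟩ := Submodule.mem_span_singleton.mp hp
    by_cases hc : c = 0
    · subst hc
      rw [hV'i]
      have hzq : z = q := by rw [← hpq]; simp
      exact hzq ▸ hq
    · exfalso
      have hvwj : v (w j) = c⁻¹ • (z - q) := by
        rw [← hpq, add_sub_cancel_right, smul_smul, inv_mul_cancel₀ hc, one_smul]
      set A : Set (Fin n) := {t : Fin n | (t : ℕ) < (k : ℕ)} ∪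
        (w '' {s : Fin n | (s : ℕ) < ((j.castSucc : Fin (n+1)) : ℕ)}) with hA
      have hz' : z ∈ span K (v '' A) := by
        apply span_mono (Set.image_mono Set.subset_union_left)
        rw [hVi] at hz1; exact hz1
      have hq' : q ∈ span K (v '' A) := by
        apply span_mono (Set.image_mono Set.subset_union_right)
        exact hq
      have hvwj' : v (w j) ∈ span K (v '' A) := by
        rw [hvwj]
        exact Submodule.smul_mem _ _ (Submodule.sub_mem _ hz' hq')
      apply li.notMem_span_image (s := A) ?_ hvwj'
      rw [hA]
      rintro (h | ⟨s, hs, hws⟩)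
      · exact hnlt h
      · have : s = j := w.injective hws
        subst this
        simp at hs


/-- Choice of the adapted vector at step `t`. -/
lemma exists_adapted_vector
    {V V' : Fin (n + 1) → Submodule K (Fin n → K)}
    (hdim : ∀ i : Fin (n + 1), Module.finrank K (V i) = i)
    (hdim' : ∀ i : Fin (n + 1), Module.finrank K (V' i) = i)
    (t : Fin n) :
    ∃ j : Fin n, ∃ x : Fin n → K,
      x ∈ V t.succ ∧ x ∈ V' j.succ ∧ x ∉ V t.castSucc ∧
      V t.succ ⊓ V' j.castSucc ≤ V t.castSucc := by
  classical
  have hn : 0 < n := t.pos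
  have hnotle : ¬ (V t.succ ≤ V t.castSucc) := by
    intro h
    have := Submodule.finrank_mono h
    rw [hdim, hdim] at this
    simp [Fin.val_succ, Fin.coe_castSucc] at this
  obtain ⟨x0, hx0, hx0'⟩ := SetLike.not_le_iff_exists.mp hnotle
  set Q : ℕ → Prop := fun m => ∃ hm : m < n, ∃ x : Fin n → K,
    x ∈ V t.succ ∧ x ∈ V' ((⟨m, hm⟩ : Fin n).succ) ∧ x ∉ V t.castSucc with hQdef
  have hQ : Q (n - 1) := by
    refine ⟨by omega, x0, hx0, ?_, hx0'⟩
    have htopV' : V' ((⟨n - 1, by omega⟩ : Fin n).succ) = ⊤ := by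
      apply Submodule.eq_top_of_finrank_eq
      rw [hdim']
      simp [Fin.val_succ, Module.finrank_fin_fun]
      omega
    rw [htopV']
    trivial
  have hex : ∃ m, Q m := ⟨n - 1, hQ⟩
  obtain ⟨hm, x, hx1, hx2, hx3⟩ := Nat.find_spec hex
  refine ⟨⟨Nat.find hex, hm⟩, x, hx1, hx2, hx3, ?_⟩
  rcases Nat.eq_zero_or_pos (Nat.find hex) with h0 | hpos
  · have hbot : V' (Fin.castSucc (⟨Nat.find hex, hm⟩ : Fin n)) = ⊥ := by
      apply Submodule.finrank_eq_zero.mp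
      rw [hdim']
      simp [h0]
    rw [hbot]
    simp
  · set m := Nat.find hex with hmdef
    have hnQ : ¬ Q (m - 1) := Nat.find_min hex (by omega)
    rintro y ⟨hy1, hy2⟩
    by_contra hy3
    apply hnQ
    refine ⟨by omega, y, hy1, ?_, hy3⟩
    have hidx : ((⟨m - 1, by omega⟩ : Fin n).succ : Fin (n + 1))
        = Fin.castSucc (⟨m, hm⟩ : Fin n) := by
      ext
      simp [Fin.val_succ]
      omega
    rw [hidx]
    exact hy2

end Aux

/-- Given two complete flags `V₀ ⊂ V₁ ⊂ … ⊂ V_n` and `V'₀ ⊂ V'₁ ⊂ … ⊂ V'_n` in `K^n`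
(`dim V_i = dim V'_i = i`), there exists a unique permutation `w` of `{1,…,n}` (here indexed
by `Fin n`) such that there is a basis `v₁,…,v_n` of `K^n` with `{v₁,…,v_i}` a basis of `V_i`
and `{v_{w(1)},…,v_{w(i)}}` a basis of `V'_i` for all `i`. -/
theorem relative_position_of_flags
    (K : Type) [Field K] (n : ℕ)
    (V V' : Fin (n + 1) → Submodule K (Fin n → K))
    (hmono : ∀ i j : Fin (n + 1), i ≤ j → V i ≤ V j)
    (hmono' : ∀ i j : Fin (n + 1), i ≤ j → V' i ≤ V' j)
    (hdim : ∀ i : Fin (n + 1), Module.finrank K (V i) = i)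
    (hdim' : ∀ i : Fin (n + 1), Module.finrank K (V' i) = i) :
    ∃! w : Equiv.Perm (Fin n),
      ∃ v : Fin n → (Fin n → K),
        LinearIndependent K v ∧
        (∀ i : Fin (n + 1),
          V i = span K (Set.range fun j : {j : Fin n // (j : ℕ) < (i : ℕ)} => v j)) ∧
        (∀ i : Fin (n + 1),
          V' i = span K (Set.range fun j : {j : Fin n // (j : ℕ) < (i : ℕ)} => v (w j))) := by
  classical
  choose wfun xv hx1 hx2 hx3 hmin using fun t => exists_adapted_vector hdim hdim' t
  have hx4 : ∀ t, xv t ∉ V' (wfun t).castSucc := fun t h => hx3 t (hmin t ⟨hx1 t, h⟩)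
  -- injectivity of wfun
  have aux : ∀ t s : Fin n, t < s → wfun t = wfun s → False := by
    intro t s hts hw
    have hxs2 : xv s ∈ V' (wfun t).succ := by rw [hw]; exact hx2 s
    have hsup_le : V' (wfun t).castSucc ⊔ span K {xv t} ≤ V' (wfun t).succ :=
      sup_le (hmono' _ _ (by simp [Fin.le_def]))
        ((span_singleton_le_iff_mem _ _).mpr (hx2 t))
    have hlt : V' (wfun t).castSucc < V' (wfun t).castSucc ⊔ span K {xv t} := by
      apply lt_of_le_of_ne le_sup_left
      intro hEq
      exact hx4 t (hEq ▸ (le_sup_right (a := V' (wfun t).castSucc))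
        (mem_span_singleton_self (xv t)))
    have hEq : V' (wfun t).castSucc ⊔ span K {xv t} = V' (wfun t).succ := by
      apply Submodule.eq_of_le_of_finrank_le hsup_le
      have h1 := Submodule.finrank_lt_finrank_of_lt hlt
      rw [hdim'] at h1
      rw [hdim']
      simp only [Fin.val_succ, Fin.coe_castSucc] at h1 ⊢
      omega
    obtain ⟨y, hy, p, hp, hsum⟩ := Submodule.mem_sup.mp (hEq ▸ hxs2)
    obtain ⟨c, rfl⟩ := mem_span_singleton.mp hp
    have hxt_s : xv t ∈ V s.castSucc :=
      hmono _ _ (by rw [Fin.le_def, Fin.val_succ, Fin.coe_castSucc]; exact hts) (hx1 t)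
    have hy2 : y ∈ V s.succ := by
      have hy' : y = xv s - c • xv t := eq_sub_of_add_eq hsum
      rw [hy']
      exact sub_mem (hx1 s)
        (smul_mem _ _ (hmono _ _ (by simp [Fin.le_def]) hxt_s))
    have hy3 : y ∈ V s.castSucc := by
      apply hmin s
      refine ⟨hy2, ?_⟩
      rw [← hw]
      exact hy
    apply hx3 s
    rw [← hsum]
    exact add_mem hy3 (smul_mem _ _ hxt_s)
  have winj : Function.Injective wfun := by
    intro a b hab
    rcases lt_trichotomy a b with h | h | h
    · exact (aux a b h hab).elim
    · exact h
    · exact (aux b a h hab.symm).elim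
  -- spans of the first flag
  have spanV : ∀ i : Fin (n + 1),
      V i = span K (Set.range fun j : {j : Fin n // (j : ℕ) < (i : ℕ)} => xv j) := by
    intro i
    induction i using Fin.induction with
    | zero =>
      have h0 : V 0 = ⊥ := Submodule.finrank_eq_zero.mp (by simp [hdim])
      have : IsEmpty {j : Fin n // (j : ℕ) < ((0 : Fin (n + 1)) : ℕ)} :=
        ⟨fun j => by simpa using j.2⟩
      rw [h0, Set.range_eq_empty]
      simp
    | succ i ih =>
      have hset : (Set.range fun j : {j : Fin n // (j : ℕ) < ((i.succ : Fin (n+1)) : ℕ)} => xv j)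
          = insert (xv i)
            (Set.range fun j : {j : Fin n // (j : ℕ) < ((i.castSucc : Fin (n+1)) : ℕ)} => xv j) := by
        rw [range_sub, range_sub, set_insert, Set.image_insert_eq]
      rw [hset, Submodule.span_insert, ← ih]
      symm
      apply Submodule.eq_of_le_of_finrank_le
      · exact sup_le ((span_singleton_le_iff_mem _ _).mpr (hx1 i))
          (hmono _ _ (by simp [Fin.le_def]))
      · have hlt : V i.castSucc < span K {xv i} ⊔ V i.castSucc := by
          apply lt_of_le_of_ne le_sup_right
          intro hEq
          exact hx3 i (hEq ▸ (le_sup_left (b := V i.castSucc))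
            (mem_span_singleton_self (xv i)))
        have h1 := Submodule.finrank_lt_finrank_of_lt hlt
        rw [hdim] at h1
        rw [hdim]
        simp only [Fin.val_succ, Fin.coe_castSucc] at h1 ⊢
        omega
  -- linear independence
  have hVlast : V (Fin.last n) = ⊤ := by
    apply Submodule.eq_top_of_finrank_eq
    rw [hdim]
    simp [Module.finrank_fin_fun]
  have htop : ⊤ ≤ span K (Set.range xv) := by
    rw [← hVlast, spanV]
    apply span_mono
    rintro _ ⟨⟨j, hj⟩, rfl⟩
    exact ⟨j, rfl⟩
  have li : LinearIndependent K xv :=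
    linearIndependent_of_top_le_span_of_card_eq_finrank htop
      (by simp [Module.finrank_fin_fun])
  -- the permutation
  have wbij : Function.Bijective wfun := Finite.injective_iff_bijective.mp winj
  set wE : Equiv.Perm (Fin n) := Equiv.ofBijective wfun wbij with hwEdef
  have hwE : ∀ j, wfun (wE.symm j) = j := fun j => wE.apply_symm_apply j
  have hcard : ∀ i : Fin (n + 1),
      Fintype.card {j : Fin n // (j : ℕ) < (i : ℕ)} = (i : ℕ) := by
    intro i
    have hi : (i : ℕ) ≤ n := Nat.lt_succ_iff.mp i.isLt
    have e : {j : Fin n // (j : ℕ) < (i : ℕ)} ≃ Fin (i : ℕ) :=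
      { toFun := fun j => ⟨j.1, j.2⟩
        invFun := fun k => ⟨⟨k.1, lt_of_lt_of_le k.2 hi⟩, k.2⟩
        left_inv := fun j => rfl
        right_inv := fun k => rfl }
    rw [Fintype.card_congr e, Fintype.card_fin]
  -- spans of the second flag
  have spanV' : ∀ i : Fin (n + 1),
      V' i = span K (Set.range fun j : {j : Fin n // (j : ℕ) < (i : ℕ)} => xv (wE.symm j)) := by
    intro i
    have hle : span K (Set.range fun j : {j : Fin n // (j : ℕ) < (i : ℕ)} => xv (wE.symm j))
        ≤ V' i := by
      rw [span_le]
      rintro _ ⟨⟨j, hj⟩, rfl⟩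
      have h1 : xv (wE.symm j) ∈ V' j.succ := by
        have h2 := hx2 (wE.symm j)
        rwa [hwE j] at h2
      exact hmono' _ _ (by simp [Fin.le_def, Fin.val_succ]; omega) h1
    symm
    apply Submodule.eq_of_le_of_finrank_le hle
    have li' : LinearIndependent K
        (fun j : {j : Fin n // (j : ℕ) < (i : ℕ)} => xv (wE.symm j)) := by
      apply li.comp
      intro a b hab
      exact Subtype.ext (wE.symm.injective hab)
    rw [hdim', finrank_span_eq_card li', hcard i]
  -- conclusion
  refine ⟨wE.symm, ⟨xv, li, spanV, spanV'⟩, ?_⟩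
  rintro w' ⟨v', li', h1, h2⟩
  apply Equiv.ext
  intro j
  have c1 := char_lemma V V' wE.symm xv li spanV spanV'
  have c2 := char_lemma V V' w' v' li' h1 h2
  have hA : ((w' j : Fin n) : ℕ) < (((wE.symm j).succ : Fin (n + 1)) : ℕ) :=
    (c2 j (wE.symm j).succ).mpr ((c1 j (wE.symm j).succ).mp (by simp [Fin.val_succ]))
  have hB : ((wE.symm j : Fin n) : ℕ) < (((w' j).succ : Fin (n + 1)) : ℕ) :=
    (c1 j (w' j).succ).mpr ((c2 j (w' j).succ).mp (by simp [Fin.val_succ]))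
  simp only [Fin.val_succ] at hA hB
  exact Fin.ext (by omega)
end
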